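/- arXiv:1212.0631 — 3 statements merged into one kernel-verified Lean document; each statement's English description precedes it below -/
import Mathlib

section
/- Let n ≥ 2 be an integer and T > 0. Then the Lebesgue volume of the Alexandrov interval I[p,q] in n-dimensional Minkowski space equals (2·A_{n-2}/(n(n-1)))·(T/2)^n, where A_{n-2} = 2π^{(n-1)/2}/Γ((n-1)/2) is the surface area of the unit sphere S^{n-2} ⊂ ℝ^{n-1}. -/
open MeasureTheory

/-- A point of `n`-dimensional Minkowski space: a time coordinate in `ℝ`
and a spatial part in `ℝ^{n-1}` (with the Euclidean norm). -/
abbrev MinkPt (n : ℕ) := ℝ × EuclideanSpace ℝ (Fin (n - 1))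

/-- The Minkowski causal order: `x ⪯ y` iff `y⁰ - x⁰ ≥ ‖y⃗ - x⃗‖`. -/
def causalLE {n : ℕ} (x y : MinkPt n) : Prop := ‖y.2 - x.2‖ ≤ y.1 - x.1

/-- The bottom tip `p = (-T/2, 0)` of the causal diamond. -/
noncomputable def pDiam (n : ℕ) (T : ℝ) : MinkPt n := (-(T / 2), 0)

/-- The top tip `q = (T/2, 0)` of the causal diamond. -/
noncomputable def qDiam (n : ℕ) (T : ℝ) : MinkPt n := (T / 2, 0)

/-- The Alexandrov interval (causal diamond) `I[p,q] = {x : p ⪯ x ⪯ q}`. -/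
def diamond (n : ℕ) (T : ℝ) : Set (MinkPt n) :=
  {x | causalLE (pDiam n T) x ∧ causalLE x (qDiam n T)}

/-- The surface area `A_{d} = 2π^{(d+1)/2}/Γ((d+1)/2)` of the unit sphere `S^{d} ⊂ ℝ^{d+1}`;
here we take `d = n - 2`, so `A_{n-2} = 2π^{(n-1)/2}/Γ((n-1)/2)`. -/
noncomputable def sphereArea (n : ℕ) : ℝ :=
  2 * Real.pi ^ (((n : ℝ) - 1) / 2) / Real.Gamma (((n : ℝ) - 1) / 2)

lemma gcont {T : ℝ} (d : ℕ) :
    Continuous (fun t : ℝ => (max (min (t + T/2) (T/2 - t)) 0) ^ d) :=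
  (((continuous_id.add continuous_const).min (continuous_const.sub continuous_id)).max
    continuous_const).pow d

lemma gzero {T : ℝ} (d : ℕ) (hd : 1 ≤ d) {t : ℝ} (ht : t ∉ Set.Icc (-(T/2)) (T/2)) :
    (max (min (t + T/2) (T/2 - t)) 0) ^ d = 0 := by
  simp only [Set.mem_Icc, not_and_or, not_le] at ht
  have : min (t + T/2) (T/2 - t) < 0 := by
    rcases ht with h | h
    · exact (min_le_left _ _).trans_lt (by linarith)
    · exact (min_le_right _ _).trans_lt (by linarith)
  rw [max_eq_right this.le, zero_pow (by omega)]

lemma ginteg {T : ℝ} (d : ℕ) (hd : 1 ≤ d) :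
    Integrable (fun t : ℝ => (max (min (t + T/2) (T/2 - t)) 0) ^ d) := by
  apply (gcont d).integrable_of_hasCompactSupport
  apply HasCompactSupport.intro isCompact_Icc
  exact fun x hx => gzero d hd hx

lemma gintegral (d : ℕ) (hd : 1 ≤ d) {T : ℝ} (hT : 0 < T) :
    ∫ t : ℝ, (max (min (t + T/2) (T/2 - t)) 0) ^ d
      = 2 * (T/2) ^ (d+1) / (d+1) := by
  have h0 : (0:ℝ) ≤ T/2 := by linarith
  rw [← setIntegral_eq_integral_of_forall_compl_eq_zero
        (s := Set.Icc (-(T/2)) (T/2)) (fun x hx => gzero d hd hx)]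
  rw [MeasureTheory.integral_Icc_eq_integral_Ioc,
    ← intervalIntegral.integral_of_le (by linarith),
    ← intervalIntegral.integral_add_adjacent_intervals (b := 0)
      (((gcont d).intervalIntegrable _ _)) (((gcont d).intervalIntegrable _ _))]
  have h1 : ∫ t in (-(T/2))..0, (max (min (t + T/2) (T/2 - t)) 0) ^ d = (T/2)^(d+1)/(d+1) := by
    have : ∀ t ∈ Set.uIcc (-(T/2)) 0, (max (min (t + T/2) (T/2 - t)) 0) ^ d = (t + T/2) ^ d := by
      intro t ht
      rw [Set.uIcc_of_le (by linarith)] at ht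
      obtain ⟨ht1, ht2⟩ := Set.mem_Icc.mp ht
      rw [min_eq_left (by linarith), max_eq_left (by linarith)]
    rw [intervalIntegral.integral_congr this,
      intervalIntegral.integral_comp_add_right (fun u => u ^ d) (T/2)]
    simp [integral_pow]
  have h2 : ∫ t in (0:ℝ)..(T/2), (max (min (t + T/2) (T/2 - t)) 0) ^ d = (T/2)^(d+1)/(d+1) := by
    have : ∀ t ∈ Set.uIcc (0:ℝ) (T/2), (max (min (t + T/2) (T/2 - t)) 0) ^ d = (T/2 - t) ^ d := by
      intro t ht
      rw [Set.uIcc_of_le (by linarith)] at ht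
      obtain ⟨ht1, ht2⟩ := Set.mem_Icc.mp ht
      rw [min_eq_right (by linarith), max_eq_left (by linarith)]
    rw [intervalIntegral.integral_congr this,
      intervalIntegral.integral_comp_sub_left (fun u => u ^ d) (T/2)]
    simp [integral_pow]
  rw [h1, h2]; ring

/-- The Lebesgue volume of the Alexandrov interval `I[p,q]` in `n`-dimensional
Minkowski space is `(2 A_{n-2}/(n(n-1)))·(T/2)^n`. -/
theorem stmt2 (n : ℕ) (hn : 2 ≤ n) (T : ℝ) (hT : 0 < T) :
    (volume (diamond n T)).toReal =
      2 * sphereArea n / ((n : ℝ) * ((n : ℝ) - 1)) * (T / 2) ^ n := by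
  haveI : Nonempty (Fin (n-1)) := ⟨⟨0, by omega⟩⟩
  set d := n - 1 with hdd
  have hd1 : 1 ≤ d := by omega
  set S : Set (ℝ × EuclideanSpace ℝ (Fin d)) :=
    {z | dist z.2 0 ≤ min (z.1 + T/2) (T/2 - z.1)} with hS
  have hset : diamond n T = S := by
    ext z
    simp only [diamond, causalLE, pDiam, qDiam, hS, Set.mem_setOf_eq, dist_zero_right,
      sub_zero, zero_sub, norm_neg, le_min_iff, sub_neg_eq_add]
    exact Iff.rfl
  have hmeas : MeasurableSet S := by
    exact (isClosed_le (continuous_snd.dist continuous_const)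
      ((continuous_fst.add continuous_const).min (continuous_const.sub continuous_fst))).measurableSet
  rw [hset, Measure.volume_eq_prod, Measure.prod_apply hmeas]
  have hpre : ∀ t : ℝ, (Prod.mk t ⁻¹' S)
      = Metric.closedBall (0 : EuclideanSpace ℝ (Fin d)) (min (t + T/2) (T/2 - t)) := fun t => rfl
  simp_rw [hpre, EuclideanSpace.volume_closedBall, Fintype.card_fin]
  have hC : (0:ℝ) ≤ Real.sqrt Real.pi ^ d / Real.Gamma (d / 2 + 1) := by
    apply div_nonneg (pow_nonneg (Real.sqrt_nonneg _) _)
    exact (Real.Gamma_pos_of_pos (by positivity)).le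
  have key : ∀ t : ℝ, (ENNReal.ofReal (min (t + T/2) (T/2 - t))) ^ d
      = ENNReal.ofReal ((max (min (t + T/2) (T/2 - t)) 0) ^ d) := by
    intro t
    rw [ENNReal.ofReal_pow (le_max_right _ _)]
    congr 1
    rcases le_total (min (t + T/2) (T/2 - t)) 0 with h | h
    · rw [max_eq_right h, ENNReal.ofReal_eq_zero.mpr h, ENNReal.ofReal_zero]
    · rw [max_eq_left h]
  simp_rw [← hdd, key]
  rw [lintegral_mul_const _ (show Measurable fun t : ℝ =>
      ENNReal.ofReal ((max (min (t + T/2) (T/2 - t)) 0) ^ d) by fun_prop)]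
  rw [← ofReal_integral_eq_lintegral_ofReal (ginteg d hd1)
      (ae_of_all _ fun t => pow_nonneg (le_max_right _ _) d),
    gintegral d hd1 hT, ENNReal.toReal_mul, ENNReal.toReal_ofReal (by positivity),
    ENNReal.toReal_ofReal hC]
  -- final algebra
  have hn2 : (2:ℝ) ≤ (n:ℝ) := by exact_mod_cast hn
  have hdn : (d:ℝ) = (n:ℝ) - 1 := by
    rw [hdd, Nat.cast_sub (by omega), Nat.cast_one]
  have hdn1 : d + 1 = n := by omega
  have hΓ : 0 < Real.Gamma (((n:ℝ)-1)/2) := Real.Gamma_pos_of_pos (by linarith)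
  have hsqrt : Real.sqrt Real.pi ^ d = Real.pi ^ ((((n:ℝ))-1)/2) := by
    rw [Real.sqrt_eq_rpow, ← Real.rpow_natCast (Real.pi ^ (1/2:ℝ)) d,
      ← Real.rpow_mul Real.pi_pos.le]
    congr 1; rw [hdn]; ring
  have hgamma : Real.Gamma ((d:ℝ)/2 + 1) = (((n:ℝ)-1)/2) * Real.Gamma (((n:ℝ)-1)/2) := by
    rw [hdn, Real.Gamma_add_one (by intro h; rw [div_eq_zero_iff] at h; rcases h with h|h <;> linarith)]
  rw [hdn1, hsqrt, hgamma, hdn, sphereArea]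
  have hΓne : Real.Gamma (((n:ℝ)-1)/2) ≠ 0 := hΓ.ne'
  have hn1 : (n:ℝ) - 1 ≠ 0 := by linarith
  have hn0 : (n:ℝ) ≠ 0 := by linarith
  field_simp
  ring_nf
  exact mul_inv_cancel₀ hn0
end

section
/- Let n ≥ 2 be an integer, T > 0, and m ≥ 0 a real number. Then ∫_{I[p,q]} τ(x,q)^m dx = (A_{n-2}/2^{n-1}) · T^{n+m} · Γ(n-1)·Γ(m/2+1) / ( (n+m)·Γ(n+m/2) ), where the integral is with respect to Lebesgue measure on ℝ^n. (For m an even integer this is the formula (A_{n-2} T^{n+m}/2^{n-1}) · (n-2)!·(m/2)! / ((n+m)(n+m/2-1)!).) -/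
open MeasureTheory

/-- The proper time `τ(x,y) = √((y⁰-x⁰)² - ‖y⃗-x⃗‖²)` between causally related points. -/
noncomputable def tau {n : ℕ} (x y : MinkPt n) : ℝ :=
  Real.sqrt ((y.1 - x.1) ^ 2 - ‖y.2 - x.2‖ ^ 2)

/- ### Auxiliary lemmas -/

lemma auxBetaReal {x y : ℝ} (hx : 0 < x) (hy : 0 < y) :
    ∫ t in (0:ℝ)..1, t ^ (x - 1) * (1 - t) ^ (y - 1) =
      Real.Gamma x * Real.Gamma y / Real.Gamma (x + y) := by
  have h := Complex.Gamma_mul_Gamma_eq_betaIntegral (s := (x:ℂ)) (t := (y:ℂ))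
    (by simpa using hx) (by simpa using hy)
  have hbeta : Complex.betaIntegral (x:ℂ) (y:ℂ)
      = ((∫ t in (0:ℝ)..1, t ^ (x - 1) * (1 - t) ^ (y - 1) : ℝ) : ℂ) := by
    rw [Complex.betaIntegral, ← intervalIntegral.integral_ofReal]
    refine intervalIntegral.integral_congr fun t ht => ?_
    rw [Set.uIcc_of_le (by norm_num : (0:ℝ) ≤ 1)] at ht
    obtain ⟨ht0, ht1⟩ := ht
    rw [Complex.ofReal_mul, Complex.ofReal_cpow ht0,
      Complex.ofReal_cpow (by linarith : (0:ℝ) ≤ 1 - t)]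
    push_cast
    ring
  rw [hbeta] at h
  have hGxy : Complex.Gamma ((x:ℂ) + (y:ℂ)) = ((Real.Gamma (x + y) : ℝ) : ℂ) := by
    rw [← Complex.ofReal_add, Complex.Gamma_ofReal]
  rw [Complex.Gamma_ofReal, Complex.Gamma_ofReal, hGxy] at h
  have h2 : (Real.Gamma x * Real.Gamma y : ℝ)
      = Real.Gamma (x + y) * ∫ t in (0:ℝ)..1, t ^ (x - 1) * (1 - t) ^ (y - 1) := by
    exact_mod_cast h
  have hpos : 0 < Real.Gamma (x + y) := Real.Gamma_pos_of_pos (by linarith)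
  field_simp [hpos.ne'] at h2 ⊢
  linarith [h2]

lemma auxBetaScaled (n : ℕ) (hn : 2 ≤ n) (m : ℝ) (hm : 0 ≤ m) {b : ℝ} (hb : 0 < b) :
    ∫ a in (0:ℝ)..b, a ^ (m / 2) * (b - a) ^ (n - 2) =
      Real.Gamma (m / 2 + 1) * Real.Gamma ((n:ℝ) - 1) / Real.Gamma ((n:ℝ) + m / 2)
        * b ^ ((n:ℝ) - 1 + m / 2) := by
  have hn' : (2:ℝ) ≤ (n:ℝ) := by exact_mod_cast hn
  have hsub := intervalIntegral.integral_comp_mul_left (a := (0:ℝ)) (b := (1:ℝ))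
    (fun a : ℝ => a ^ (m / 2) * (b - a) ^ (n - 2)) hb.ne'
  simp only [mul_zero, mul_one] at hsub
  have h2 : ∀ t ∈ Set.uIcc (0:ℝ) 1,
      (b * t) ^ (m / 2) * (b - b * t) ^ (n - 2)
        = (b ^ (m / 2) * b ^ (n - 2)) * (t ^ (m / 2) * (1 - t) ^ ((n:ℝ) - 2)) := by
    intro t ht
    rw [Set.uIcc_of_le (by norm_num : (0:ℝ) ≤ 1)] at ht
    have h1t : (0:ℝ) ≤ 1 - t := by linarith [ht.2]
    have hc : ((n:ℝ) - 2) = ((n - 2 : ℕ) : ℝ) := by push_cast [Nat.cast_sub hn]; ring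
    rw [hc, Real.rpow_natCast, Real.mul_rpow hb.le ht.1,
      show b - b * t = b * (1 - t) by ring, mul_pow]
    ring
  rw [intervalIntegral.integral_congr h2, intervalIntegral.integral_const_mul] at hsub
  have hbeta : ∫ t in (0:ℝ)..1, t ^ (m / 2) * (1 - t) ^ ((n:ℝ) - 2)
      = Real.Gamma (m / 2 + 1) * Real.Gamma ((n:ℝ) - 1) / Real.Gamma ((n:ℝ) + m / 2) := by
    have hB := auxBetaReal (x := m / 2 + 1) (y := (n:ℝ) - 1)
      (by positivity) (by linarith)
    rw [show m / 2 + 1 - 1 = m / 2 by ring, show (n:ℝ) - 1 - 1 = (n:ℝ) - 2 by ring,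
      show m / 2 + 1 + ((n:ℝ) - 1) = (n:ℝ) + m / 2 by ring] at hB
    exact hB
  rw [hbeta] at hsub
  have hfin := congrArg (fun z => b * z) hsub
  simp only [smul_eq_mul, ← mul_assoc, mul_inv_cancel₀ hb.ne', one_mul] at hfin
  rw [← hfin]
  have hpow : b ^ ((n:ℝ) - 1 + m / 2) = b * (b ^ (m / 2) * b ^ (n - 2)) := by
    rw [show (n:ℝ) - 1 + m / 2 = 1 + ((n - 2 : ℕ) : ℝ) + m / 2 by
        push_cast [Nat.cast_sub hn]; ring,
      Real.rpow_add hb, Real.rpow_add hb, Real.rpow_one, Real.rpow_natCast]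
    ring
  rw [hpow]; ring

lemma auxInnerEval (n : ℕ) (hn : 2 ≤ n) (m : ℝ) (hm : 0 ≤ m) {b : ℝ} (hb : 0 ≤ b) :
    ∫ y in (0:ℝ)..(b / 2), (y : ℝ) ^ (n - 2) * (b ^ 2 - 2 * b * y) ^ (m / 2) =
      Real.Gamma (m / 2 + 1) * Real.Gamma ((n:ℝ) - 1) / Real.Gamma ((n:ℝ) + m / 2)
        * b ^ ((n:ℝ) + m - 1) / 2 ^ (n - 1) := by
  have hn' : (2:ℝ) ≤ (n:ℝ) := by exact_mod_cast hn
  rcases hb.eq_or_lt with rfl | hb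
  · simp [Real.zero_rpow (by linarith : (n:ℝ) + m - 1 ≠ 0)]
  · have h1 := intervalIntegral.integral_comp_div (a := (0:ℝ)) (b := b) (c := 2)
      (fun y : ℝ => y ^ (n - 2) * (b ^ 2 - 2 * b * y) ^ (m / 2)) two_ne_zero
    simp only [zero_div] at h1
    have h2 := intervalIntegral.integral_comp_sub_left (a := (0:ℝ)) (b := b)
      (fun a : ℝ => ((b - a) / 2) ^ (n - 2) * (b * a) ^ (m / 2)) b
    simp only [sub_self, sub_zero] at h2
    have heq : ∀ x : ℝ,
        (fun y : ℝ => y ^ (n - 2) * (b ^ 2 - 2 * b * y) ^ (m / 2)) (x / 2)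
          = (fun a : ℝ => ((b - a) / 2) ^ (n - 2) * (b * a) ^ (m / 2)) (b - x) := by
      intro x
      simp only []
      congr 1
      · congr 1; ring
      · congr 1; ring
    rw [intervalIntegral.integral_congr (fun x _ => heq x), h2] at h1
    have h3 : ∀ a ∈ Set.uIcc (0:ℝ) b,
        ((b - a) / 2) ^ (n - 2) * (b * a) ^ (m / 2)
          = ((2:ℝ) ^ (n - 2))⁻¹ * b ^ (m / 2) * (a ^ (m / 2) * (b - a) ^ (n - 2)) := by
      intro a ha
      rw [Set.uIcc_of_le hb.le] at ha
      rw [div_pow, Real.mul_rpow hb.le ha.1]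
      field_simp
    rw [intervalIntegral.integral_congr h3, intervalIntegral.integral_const_mul,
      auxBetaScaled n hn m hm hb] at h1
    have h4 : ∫ y in (0:ℝ)..(b / 2), (y : ℝ) ^ (n - 2) * (b ^ 2 - 2 * b * y) ^ (m / 2)
        = (2:ℝ)⁻¹ * (((2:ℝ) ^ (n - 2))⁻¹ * b ^ (m / 2) *
            (Real.Gamma (m / 2 + 1) * Real.Gamma ((n:ℝ) - 1) / Real.Gamma ((n:ℝ) + m / 2)
              * b ^ ((n:ℝ) - 1 + m / 2))) := by
      rw [h1, smul_eq_mul, ← mul_assoc, inv_mul_cancel₀ (two_ne_zero), one_mul]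
    rw [h4]
    have hbpow : b ^ (m / 2) * b ^ ((n:ℝ) - 1 + m / 2) = b ^ ((n:ℝ) + m - 1) := by
      rw [← Real.rpow_add hb]; congr 1; ring
    have h2pow : (2:ℝ) ^ (n - 1) = 2 * 2 ^ (n - 2) := by
      rw [show n - 1 = (n - 2) + 1 by omega, pow_succ]; ring
    rw [h2pow]
    field_simp
    rw [← hbpow]
    ring

lemma auxSphere (n : ℕ) (hn : 2 ≤ n) :
    ((n - 1 : ℕ) : ℝ) * (volume (Metric.ball (0 : EuclideanSpace ℝ (Fin (n - 1))) 1)).toReal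
      = sphereArea n := by
  haveI : Nonempty (Fin (n - 1)) := ⟨⟨0, by omega⟩⟩
  rw [EuclideanSpace.volume_ball]
  have hcard : Fintype.card (Fin (n - 1)) = n - 1 := Fintype.card_fin _
  rw [hcard]
  have hc : ((n - 1 : ℕ) : ℝ) = (n : ℝ) - 1 := by push_cast [Nat.cast_sub (by omega : 1 ≤ n)]; ring
  have hs : 0 < ((n : ℝ) - 1) / 2 := by
    have : (2:ℝ) ≤ (n:ℝ) := by exact_mod_cast hn
    linarith
  have hΓ : 0 < Real.Gamma (((n:ℝ) - 1) / 2) := Real.Gamma_pos_of_pos hs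
  have hpi : Real.sqrt Real.pi ^ (n - 1) = Real.pi ^ (((n:ℝ) - 1) / 2) := by
    rw [Real.sqrt_eq_rpow, ← Real.rpow_natCast (Real.pi ^ ((1:ℝ)/2)) (n - 1),
      ← Real.rpow_mul Real.pi_pos.le, hc]
    ring_nf
  have hnum : (0:ℝ) ≤ Real.sqrt Real.pi ^ (n - 1) / Real.Gamma (((n - 1 : ℕ) : ℝ) / 2 + 1) := by
    apply div_nonneg (by positivity)
    exact (Real.Gamma_pos_of_pos (by rw [hc]; linarith)).le
  rw [ENNReal.ofReal_one, one_pow, one_mul, ENNReal.toReal_ofReal hnum]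
  rw [hc, Real.Gamma_add_one (by positivity : ((n:ℝ) - 1) / 2 ≠ 0), hpi]
  rw [sphereArea]
  have hne : (n:ℝ) - 1 ≠ 0 := by linarith
  rw [← mul_div_assoc, div_eq_div_iff (by positivity) hΓ.ne']
  ring

lemma auxIntegrable {α : Type*} [NormedAddCommGroup α] [MeasurableSpace α]
    [OpensMeasurableSpace α] [ProperSpace α] {μ : Measure α} [IsFiniteMeasureOnCompacts μ]
    {g : α → ℝ} (hg : Measurable g) {S : Set α} (hS : MeasurableSet S)
    {A C : ℝ} (hC : 0 ≤ C) (hA : ∀ p ∈ S, ‖p‖ ≤ A) (hb : ∀ p ∈ S, |g p| ≤ C) :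
    Integrable (S.indicator g) μ := by
  refine Integrable.mono' (g := (Metric.closedBall (0:α) A).indicator fun _ => C) ?_ ?_ ?_
  · rw [integrable_indicator_iff measurableSet_closedBall]
    exact integrableOn_const measure_closedBall_lt_top.ne
  · exact (hg.indicator hS).aestronglyMeasurable
  · refine Filter.Eventually.of_forall fun x => ?_
    by_cases hx : x ∈ S
    · rw [Set.indicator_of_mem hx,
        Set.indicator_of_mem (by simpa [Metric.mem_closedBall, dist_zero_right] using hA x hx)]
      simpa [Real.norm_eq_abs] using hb x hx
    · rw [Set.indicator_of_notMem hx]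
      simp only [norm_zero]
      exact Set.indicator_nonneg (fun _ _ => hC) _

set_option maxHeartbeats 1600000 in
/-- `∫_{I[p,q]} τ(x,q)^m dx
  = (A_{n-2}/2^{n-1}) · T^{n+m} · Γ(n-1)·Γ(m/2+1) / ((n+m)·Γ(n+m/2))`. -/
theorem stmt3 (n : ℕ) (hn : 2 ≤ n) (T m : ℝ) (hT : 0 < T) (hm : 0 ≤ m) :
    (∫ x in diamond n T, tau x (qDiam n T) ^ m) =
      sphereArea n / 2 ^ (n - 1) * T ^ ((n : ℝ) + m) *
        (Real.Gamma ((n : ℝ) - 1) * Real.Gamma (m / 2 + 1)) /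
        (((n : ℝ) + m) * Real.Gamma ((n : ℝ) + m / 2)) := by
  have hn' : (2:ℝ) ≤ (n:ℝ) := by exact_mod_cast hn
  haveI : Nonempty (Fin (n - 1)) := ⟨⟨0, by omega⟩⟩
  -- membership in the diamond
  have hmem : ∀ x : MinkPt n, x ∈ diamond n T ↔ (‖x.2‖ ≤ T / 2 - x.1 ∧ ‖x.2‖ ≤ T / 2 + x.1) := by
    intro x
    simp only [diamond, causalLE, pDiam, qDiam, Set.mem_setOf_eq, sub_zero, zero_sub, norm_neg,
      sub_neg_eq_add]
    constructor
    · rintro ⟨h1, h2⟩; exact ⟨h2, by linarith⟩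
    · rintro ⟨h1, h2⟩; exact ⟨by linarith, h1⟩
  -- measurability of the diamond
  have hdiam_meas : MeasurableSet (diamond n T) := by
    have hset : diamond n T =
        {x : MinkPt n | ‖x.2 - (pDiam n T).2‖ ≤ x.1 - (pDiam n T).1}
          ∩ {x : MinkPt n | ‖(qDiam n T).2 - x.2‖ ≤ (qDiam n T).1 - x.1} := rfl
    rw [hset]
    exact ((isClosed_le (by fun_prop) (by fun_prop)).inter
      (isClosed_le (by fun_prop) (by fun_prop))).measurableSet
  -- measurability of the integrand
  have htau_meas : Measurable fun x : MinkPt n => tau x (qDiam n T) ^ m := by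
    unfold tau; fun_prop
  -- integrability on the diamond
  have hInt1 : Integrable ((diamond n T).indicator fun x => tau x (qDiam n T) ^ m) volume := by
    refine auxIntegrable htau_meas hdiam_meas (A := T) (C := T ^ m)
      (Real.rpow_nonneg hT.le m) ?_ ?_
    · intro p hp
      obtain ⟨h1, h2⟩ := (hmem p).1 hp
      have h0 : (0:ℝ) ≤ ‖p.2‖ := norm_nonneg _
      rw [Prod.norm_def, sup_le_iff]
      constructor
      · rw [Real.norm_eq_abs, abs_le]; constructor <;> linarith
      · linarith
    · intro p hp
      obtain ⟨h1, h2⟩ := (hmem p).1 hp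
      have h0 : (0:ℝ) ≤ ‖p.2‖ := norm_nonneg _
      have htle : tau p (qDiam n T) ≤ T := by
        unfold tau
        have hb : ((qDiam n T).1 - p.1) ^ 2 - ‖(qDiam n T).2 - p.2‖ ^ 2 ≤ T ^ 2 := by
          have : ((qDiam n T).1 - p.1) ^ 2 ≤ T ^ 2 := by
            apply sq_le_sq'
            · simp only [qDiam]; linarith
            · simp only [qDiam]; linarith
          nlinarith [norm_nonneg ((qDiam n T).2 - p.2), sq_nonneg ‖(qDiam n T).2 - p.2‖]
        calc Real.sqrt _ ≤ Real.sqrt (T ^ 2) := Real.sqrt_le_sqrt hb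
          _ = T := by rw [Real.sqrt_sq hT.le]
      have htau0 : (0:ℝ) ≤ tau p (qDiam n T) := Real.sqrt_nonneg _
      rw [abs_of_nonneg (Real.rpow_nonneg htau0 m)]
      exact Real.rpow_le_rpow htau0 htle hm
  -- Step 1 : Fubini on ℝ × ℝ^{n-1}
  have E1 : (∫ x in diamond n T, tau x (qDiam n T) ^ m)
      = ∫ t : ℝ, ∫ v : EuclideanSpace ℝ (Fin (n - 1)),
          (diamond n T).indicator (fun x => tau x (qDiam n T) ^ m) (t, v) := by
    rw [← MeasureTheory.integral_indicator hdiam_meas]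
    have hvol : (volume : Measure (MinkPt n))
        = (volume : Measure ℝ).prod (volume : Measure (EuclideanSpace ℝ (Fin (n - 1)))) :=
      Measure.volume_eq_prod _ _
    have h := MeasureTheory.integral_prod (μ := (volume : Measure ℝ))
      (ν := (volume : Measure (EuclideanSpace ℝ (Fin (n - 1)))))
      ((diamond n T).indicator fun x => tau x (qDiam n T) ^ m)
      (hvol ▸ hInt1)
    rw [← hvol] at h
    exact h
  -- rewrite the indicator pointwise
  have E3 : ∀ (t : ℝ) (v : EuclideanSpace ℝ (Fin (n - 1))),
      (diamond n T).indicator (fun x => tau x (qDiam n T) ^ m) (t, v)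
        = if ‖v‖ ≤ T / 2 - t ∧ ‖v‖ ≤ T / 2 + t then
            Real.sqrt ((T / 2 - t) ^ 2 - ‖v‖ ^ 2) ^ m else 0 := by
    intro t v
    have hiff := hmem (t, v)
    by_cases h : (t, v) ∈ diamond n T
    · rw [Set.indicator_of_mem h, if_pos (hiff.1 h)]
      unfold tau
      simp [qDiam, norm_neg]
    · rw [Set.indicator_of_notMem h, if_neg (fun hc => h (hiff.2 hc))]
  -- Step 2 : polar coordinates in the space slice
  have E4 : ∀ t : ℝ,
      (∫ v : EuclideanSpace ℝ (Fin (n - 1)),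
        if ‖v‖ ≤ T / 2 - t ∧ ‖v‖ ≤ T / 2 + t then
          Real.sqrt ((T / 2 - t) ^ 2 - ‖v‖ ^ 2) ^ m else 0)
        = (((n - 1 : ℕ) : ℝ) * (volume (Metric.ball (0 : EuclideanSpace ℝ (Fin (n - 1))) 1)).toReal)
          * ∫ y in Set.Ioi (0:ℝ), y ^ (n - 2) *
              (if y ≤ T / 2 - t ∧ y ≤ T / 2 + t then
                Real.sqrt ((T / 2 - t) ^ 2 - y ^ 2) ^ m else 0) := by
    intro t
    have h := integral_fun_norm_addHaar (volume : Measure (EuclideanSpace ℝ (Fin (n - 1))))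
      (fun y : ℝ => if y ≤ T / 2 - t ∧ y ≤ T / 2 + t then
        Real.sqrt ((T / 2 - t) ^ 2 - y ^ 2) ^ m else 0)
    simp only [finrank_euclideanSpace_fin] at h
    rw [show n - 1 - 1 = n - 2 by omega] at h
    simpa [nsmul_eq_mul, smul_eq_mul, mul_assoc, measureReal_def] using h
  -- the two indicator functions on ℝ² used for the Fubini swaps
  set Phi : ℝ × ℝ → ℝ := Set.indicator {p : ℝ × ℝ | 0 ≤ p.2 ∧ p.2 ≤ p.1 ∧ p.2 ≤ T - p.1}
    (fun p => p.2 ^ (n - 2) * (p.1 ^ 2 - p.2 ^ 2) ^ (m / 2)) with hPhidef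
  set Psi : ℝ × ℝ → ℝ := Set.indicator {p : ℝ × ℝ | 0 ≤ p.1 ∧ 2 * p.1 ≤ p.2 ∧ p.2 ≤ T}
    (fun p => p.1 ^ (n - 2) * (p.2 ^ 2 - 2 * p.2 * p.1) ^ (m / 2)) with hPsidef
  -- the key 1-dimensional computation
  have key : (∫ t : ℝ, ∫ y in Set.Ioi (0:ℝ), y ^ (n - 2) *
        (if y ≤ T / 2 - t ∧ y ≤ T / 2 + t then
          Real.sqrt ((T / 2 - t) ^ 2 - y ^ 2) ^ m else 0))
      = Real.Gamma (m / 2 + 1) * Real.Gamma ((n:ℝ) - 1) / Real.Gamma ((n:ℝ) + m / 2)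
          / 2 ^ (n - 1) * (T ^ ((n:ℝ) + m) / ((n:ℝ) + m)) := by
    -- restrict the t-integral to [-T/2, T/2]
    have hvan1 : ∀ t ∉ Set.Icc (-(T/2)) (T/2),
        (∫ y in Set.Ioi (0:ℝ), y ^ (n - 2) *
          (if y ≤ T / 2 - t ∧ y ≤ T / 2 + t then
            Real.sqrt ((T / 2 - t) ^ 2 - y ^ 2) ^ m else 0)) = 0 := by
      intro t ht
      rw [Set.mem_Icc] at ht; push_neg at ht
      have hz : ∀ y ∈ Set.Ioi (0:ℝ), y ^ (n - 2) *
          (if y ≤ T / 2 - t ∧ y ≤ T / 2 + t then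
            Real.sqrt ((T / 2 - t) ^ 2 - y ^ 2) ^ m else 0) = 0 := by
        intro y hy
        rw [Set.mem_Ioi] at hy
        rw [if_neg, mul_zero]
        rintro ⟨ha, hb⟩
        rcases lt_or_ge t (-(T/2)) with h | h
        · linarith
        · have := ht h; linarith
      rw [setIntegral_congr_fun measurableSet_Ioi hz, integral_zero]
    -- on [-T/2, T/2] rewrite as an interval integral in polar radius
    have E8 : ∀ t ∈ Set.uIcc (-(T/2)) (T/2),
        (∫ y in Set.Ioi (0:ℝ), y ^ (n - 2) *
          (if y ≤ T / 2 - t ∧ y ≤ T / 2 + t then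
            Real.sqrt ((T / 2 - t) ^ 2 - y ^ 2) ^ m else 0))
        = ∫ y in (0:ℝ)..min (T / 2 - t) (T - (T / 2 - t)),
            y ^ (n - 2) * ((T / 2 - t) ^ 2 - y ^ 2) ^ (m / 2) := by
      intro t ht
      rw [Set.uIcc_of_le (by linarith : -(T/2) ≤ T/2), Set.mem_Icc] at ht
      have h1 : T - (T/2 - t) = T/2 + t := by ring
      have hR : (0:ℝ) ≤ min (T/2 - t) (T - (T/2 - t)) := le_min (by linarith) (by rw [h1]; linarith)
      have hw : ∀ y : ℝ, y ^ (n - 2) *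
          (if y ≤ T / 2 - t ∧ y ≤ T / 2 + t then
            Real.sqrt ((T / 2 - t) ^ 2 - y ^ 2) ^ m else 0)
          = Set.indicator (Set.Iic (min (T / 2 - t) (T - (T / 2 - t))))
              (fun y => y ^ (n - 2) * Real.sqrt ((T / 2 - t) ^ 2 - y ^ 2) ^ m) y := by
        intro y
        by_cases h : y ≤ T / 2 - t ∧ y ≤ T / 2 + t
        · rw [if_pos h, Set.indicator_of_mem]
          rw [Set.mem_Iic, h1]
          exact le_min h.1 h.2
        · rw [if_neg h, mul_zero, Set.indicator_of_notMem]
          rw [Set.mem_Iic, h1, le_min_iff]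
          exact h
      rw [setIntegral_congr_fun measurableSet_Ioi (fun y _ => hw y),
        setIntegral_indicator measurableSet_Iic, Set.Ioi_inter_Iic,
        ← intervalIntegral.integral_of_le hR]
      refine intervalIntegral.integral_congr fun y hy => ?_
      rw [Set.uIcc_of_le hR, Set.mem_Icc] at hy
      have hyt : y ≤ T/2 - t := le_trans hy.2 (min_le_left _ _)
      have htt : (0:ℝ) ≤ T/2 - t := le_trans hR (min_le_left _ _)
      have hs0 : (0:ℝ) ≤ (T/2 - t)^2 - y^2 := by nlinarith [hy.1]
      congr 1
      rw [Real.sqrt_eq_rpow, ← Real.rpow_mul hs0]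
      congr 1
      ring
    -- substitute u = T/2 - t
    have E9 : (∫ t in (-(T/2))..(T/2), ∫ y in (0:ℝ)..min (T / 2 - t) (T - (T / 2 - t)),
          y ^ (n - 2) * ((T / 2 - t) ^ 2 - y ^ 2) ^ (m / 2))
        = ∫ u in (0:ℝ)..T, ∫ y in (0:ℝ)..min u (T - u),
            y ^ (n - 2) * (u ^ 2 - y ^ 2) ^ (m / 2) := by
      have h := intervalIntegral.integral_comp_sub_left (a := -(T/2)) (b := T/2)
        (fun u : ℝ => ∫ y in (0:ℝ)..min u (T - u), y ^ (n - 2) * (u ^ 2 - y ^ 2) ^ (m / 2)) (T/2)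
      rw [sub_self, sub_neg_eq_add, add_halves] at h
      exact h
    -- rewrite inner integral via the indicator Phi
    have E10 : ∀ u ∈ Set.uIcc (0:ℝ) T,
        (∫ y in (0:ℝ)..min u (T - u), y ^ (n - 2) * (u ^ 2 - y ^ 2) ^ (m / 2))
          = ∫ y : ℝ, Phi (u, y) := by
      intro u hu
      rw [Set.uIcc_of_le hT.le, Set.mem_Icc] at hu
      have hmin0 : (0:ℝ) ≤ min u (T - u) := le_min hu.1 (by linarith [hu.2])
      have hw : ∀ y : ℝ, Phi (u, y)
          = Set.indicator (Set.Icc 0 (min u (T - u)))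
              (fun y => y ^ (n - 2) * (u ^ 2 - y ^ 2) ^ (m / 2)) y := by
        intro y
        rw [hPhidef]
        by_cases h : 0 ≤ y ∧ y ≤ u ∧ y ≤ T - u
        · rw [Set.indicator_of_mem (show ((u, y) : ℝ × ℝ) ∈ _ from h),
            Set.indicator_of_mem (Set.mem_Icc.2 ⟨h.1, le_min h.2.1 h.2.2⟩)]
        · rw [Set.indicator_of_notMem (show ((u, y) : ℝ × ℝ) ∉ _ from h),
            Set.indicator_of_notMem]
          rw [Set.mem_Icc, le_min_iff]
          tauto
      simp only [hw]
      rw [MeasureTheory.integral_indicator measurableSet_Icc, integral_Icc_eq_integral_Ioc,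
        ← intervalIntegral.integral_of_le hmin0]
    -- extend the outer integral to ℝ
    have E11 : (∫ u in (0:ℝ)..T, ∫ y : ℝ, Phi (u, y)) = ∫ u : ℝ, ∫ y : ℝ, Phi (u, y) := by
      rw [intervalIntegral.integral_of_le hT.le, ← integral_Icc_eq_integral_Ioc]
      refine setIntegral_eq_integral_of_forall_compl_eq_zero fun u hu => ?_
      rw [Set.mem_Icc] at hu; push_neg at hu
      have hz : ∀ y : ℝ, Phi (u, y) = 0 := by
        intro y
        rw [hPhidef]
        refine Set.indicator_of_notMem ?_ _
        rintro ⟨h0, h1, h2⟩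
        rcases lt_or_ge u 0 with h | h
        · exact absurd (le_trans h0 h1) (not_le.2 h)
        · have := hu h; linarith
      simp only [hz, integral_zero]
    -- integrability of Phi
    have hPhiInt : Integrable Phi ((volume : Measure ℝ).prod volume) := by
      have hvol2 : (volume : Measure (ℝ × ℝ)) = (volume : Measure ℝ).prod volume :=
        Measure.volume_eq_prod _ _
      rw [← hvol2, hPhidef]
      refine auxIntegrable (by fun_prop) ?_ (A := T) (C := T ^ (n - 2) * (T ^ 2) ^ (m / 2))
        (by positivity) ?_ ?_
      · simp only [Set.setOf_and]
        exact ((isClosed_le continuous_const continuous_snd).inter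
          ((isClosed_le continuous_snd continuous_fst).inter
            (isClosed_le continuous_snd (continuous_const.sub continuous_fst)))).measurableSet
      · intro p hp
        obtain ⟨h0, h1, h2⟩ := hp
        rw [Prod.norm_def, sup_le_iff, Real.norm_eq_abs, Real.norm_eq_abs, abs_le, abs_le]
        constructor <;> constructor <;> linarith
      · intro p hp
        obtain ⟨h0, h1, h2⟩ := hp
        have h4 : 0 ≤ p.1 := le_trans h0 h1
        have h3 : p.1 ≤ T := by linarith
        have hyT : p.2 ≤ T := by linarith
        have hsq : 0 ≤ p.1 ^ 2 - p.2 ^ 2 := by nlinarith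
        rw [abs_of_nonneg (by positivity)]
        exact mul_le_mul (pow_le_pow_left₀ h0 hyT _)
          (Real.rpow_le_rpow hsq (by nlinarith) (by positivity))
          (by positivity) (by positivity)
    -- first swap
    have E12 : (∫ u : ℝ, ∫ y : ℝ, Phi (u, y)) = ∫ y : ℝ, ∫ u : ℝ, Phi (u, y) :=
      MeasureTheory.integral_integral_swap (f := fun u y => Phi (u, y)) hPhiInt
    -- compute the u-integral for fixed y
    have E13 : (∫ y : ℝ, ∫ u : ℝ, Phi (u, y))
        = ∫ y in (0:ℝ)..(T/2), ∫ u in y..(T - y),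
            y ^ (n - 2) * (u ^ 2 - y ^ 2) ^ (m / 2) := by
      have hvanish : ∀ y ∉ Set.Icc (0:ℝ) (T/2), (∫ u : ℝ, Phi (u, y)) = 0 := by
        intro y hy
        rw [Set.mem_Icc] at hy; push_neg at hy
        have hz : ∀ u : ℝ, Phi (u, y) = 0 := by
          intro u
          rw [hPhidef]
          refine Set.indicator_of_notMem ?_ _
          rintro ⟨h0, h1, h2⟩
          rcases lt_or_ge y 0 with h | h
          · exact absurd h0 (not_le.2 h)
          · have := hy h; linarith
        simp only [hz, integral_zero]
      have hper : ∀ y ∈ Set.Icc (0:ℝ) (T/2), (∫ u : ℝ, Phi (u, y))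
          = ∫ u in y..(T - y), y ^ (n - 2) * (u ^ 2 - y ^ 2) ^ (m / 2) := by
        intro y hy
        rw [Set.mem_Icc] at hy
        have hw : ∀ u : ℝ, Phi (u, y)
            = Set.indicator (Set.Icc y (T - y))
                (fun u => y ^ (n - 2) * (u ^ 2 - y ^ 2) ^ (m / 2)) u := by
          intro u
          rw [hPhidef]
          by_cases h : y ≤ u ∧ u ≤ T - y
          · rw [Set.indicator_of_mem
              (show ((u, y) : ℝ × ℝ) ∈ {p : ℝ × ℝ | 0 ≤ p.2 ∧ p.2 ≤ p.1 ∧ p.2 ≤ T - p.1} from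
                ⟨hy.1, h.1, by simp only [Set.mem_setOf_eq]; linarith [h.2]⟩),
              Set.indicator_of_mem (Set.mem_Icc.2 h)]
          · rw [Set.indicator_of_notMem, Set.indicator_of_notMem]
            · rw [Set.mem_Icc]; exact h
            · rintro ⟨h0, h1, h2⟩; exact h ⟨h1, by linarith⟩
        simp only [hw]
        rw [MeasureTheory.integral_indicator measurableSet_Icc, integral_Icc_eq_integral_Ioc,
          ← intervalIntegral.integral_of_le (by linarith [hy.2] : y ≤ T - y)]
      calc (∫ y : ℝ, ∫ u : ℝ, Phi (u, y))
          = ∫ y in Set.Icc (0:ℝ) (T/2), ∫ u : ℝ, Phi (u, y) :=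
            (setIntegral_eq_integral_of_forall_compl_eq_zero hvanish).symm
        _ = ∫ y in Set.Icc (0:ℝ) (T/2), ∫ u in y..(T - y),
              y ^ (n - 2) * (u ^ 2 - y ^ 2) ^ (m / 2) :=
            setIntegral_congr_fun measurableSet_Icc (fun y hy => hper y hy)
        _ = ∫ y in (0:ℝ)..(T/2), ∫ u in y..(T - y),
              y ^ (n - 2) * (u ^ 2 - y ^ 2) ^ (m / 2) := by
            rw [integral_Icc_eq_integral_Ioc,
              ← intervalIntegral.integral_of_le (by linarith : (0:ℝ) ≤ T/2)]
    -- substitute b = u + y in the inner integral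
    have E14 : ∀ y ∈ Set.uIcc (0:ℝ) (T/2),
        (∫ u in y..(T - y), y ^ (n - 2) * (u ^ 2 - y ^ 2) ^ (m / 2))
          = ∫ b in (2*y)..T, y ^ (n - 2) * (b ^ 2 - 2 * b * y) ^ (m / 2) := by
      intro y hy
      have h := intervalIntegral.integral_comp_sub_right (a := 2*y) (b := T)
        (fun u : ℝ => y ^ (n - 2) * (u ^ 2 - y ^ 2) ^ (m / 2)) y
      rw [show 2*y - y = y by ring] at h
      have h2 : (∫ b in (2*y)..T,
          (fun u : ℝ => y ^ (n - 2) * (u ^ 2 - y ^ 2) ^ (m / 2)) (b - y))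
          = ∫ b in (2*y)..T, y ^ (n - 2) * (b ^ 2 - 2 * b * y) ^ (m / 2) := by
        refine intervalIntegral.integral_congr fun b _ => ?_
        show y ^ (n - 2) * ((b - y) ^ 2 - y ^ 2) ^ (m / 2) = _
        rw [show (b - y) ^ 2 - y ^ 2 = b ^ 2 - 2 * b * y by ring]
      exact h.symm.trans h2
    -- rewrite via the indicator Psi
    have E15 : ∀ y ∈ Set.uIcc (0:ℝ) (T/2),
        (∫ b in (2*y)..T, y ^ (n - 2) * (b ^ 2 - 2 * b * y) ^ (m / 2))
          = ∫ b : ℝ, Psi (y, b) := by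
      intro y hy
      rw [Set.uIcc_of_le (by linarith : (0:ℝ) ≤ T/2), Set.mem_Icc] at hy
      have hw : ∀ b : ℝ, Psi (y, b)
          = Set.indicator (Set.Icc (2*y) T)
              (fun b => y ^ (n - 2) * (b ^ 2 - 2 * b * y) ^ (m / 2)) b := by
        intro b
        rw [hPsidef]
        by_cases h : 2*y ≤ b ∧ b ≤ T
        · rw [Set.indicator_of_mem
            (show ((y, b) : ℝ × ℝ) ∈ {p : ℝ × ℝ | 0 ≤ p.1 ∧ 2 * p.1 ≤ p.2 ∧ p.2 ≤ T} from
              ⟨hy.1, h.1, h.2⟩),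
            Set.indicator_of_mem (Set.mem_Icc.2 h)]
        · rw [Set.indicator_of_notMem, Set.indicator_of_notMem]
          · rw [Set.mem_Icc]; exact h
          · rintro ⟨h0, h1, h2⟩; exact h ⟨h1, h2⟩
      simp only [hw]
      rw [MeasureTheory.integral_indicator measurableSet_Icc, integral_Icc_eq_integral_Ioc,
        ← intervalIntegral.integral_of_le (by linarith [hy.2] : 2*y ≤ T)]
    -- extend to ℝ
    have E16 : (∫ y in (0:ℝ)..(T/2), ∫ b : ℝ, Psi (y, b))
        = ∫ y : ℝ, ∫ b : ℝ, Psi (y, b) := by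
      rw [intervalIntegral.integral_of_le (by linarith : (0:ℝ) ≤ T/2),
        ← integral_Icc_eq_integral_Ioc]
      refine setIntegral_eq_integral_of_forall_compl_eq_zero fun y hy => ?_
      rw [Set.mem_Icc] at hy; push_neg at hy
      have hz : ∀ b : ℝ, Psi (y, b) = 0 := by
        intro b
        rw [hPsidef]
        refine Set.indicator_of_notMem ?_ _
        rintro ⟨h0, h1, h2⟩
        rcases lt_or_ge y 0 with h | h
        · exact absurd h0 (not_le.2 h)
        · have := hy h; linarith
      simp only [hz, integral_zero]
    -- integrability of Psi
    have hPsiInt : Integrable Psi ((volume : Measure ℝ).prod volume) := by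
      have hvol2 : (volume : Measure (ℝ × ℝ)) = (volume : Measure ℝ).prod volume :=
        Measure.volume_eq_prod _ _
      rw [← hvol2, hPsidef]
      refine auxIntegrable (by fun_prop) ?_ (A := T) (C := T ^ (n - 2) * (T ^ 2) ^ (m / 2))
        (by positivity) ?_ ?_
      · simp only [Set.setOf_and]
        exact ((isClosed_le continuous_const continuous_fst).inter
          ((isClosed_le (continuous_const.mul continuous_fst) continuous_snd).inter
            (isClosed_le continuous_snd continuous_const))).measurableSet
      · intro p hp
        obtain ⟨h0, h1, h2⟩ := hp
        rw [Prod.norm_def, sup_le_iff, Real.norm_eq_abs, Real.norm_eq_abs, abs_le, abs_le]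
        constructor <;> constructor <;> linarith
      · intro p hp
        obtain ⟨h0, h1, h2⟩ := hp
        have h4 : 0 ≤ p.2 := le_trans (by linarith) h1
        have hsq : 0 ≤ p.2 ^ 2 - 2 * p.2 * p.1 := by nlinarith
        rw [abs_of_nonneg (by positivity)]
        exact mul_le_mul (pow_le_pow_left₀ h0 (by linarith) _)
          (Real.rpow_le_rpow hsq (by nlinarith) (by positivity))
          (by positivity) (by positivity)
    -- second swap
    have E17 : (∫ y : ℝ, ∫ b : ℝ, Psi (y, b)) = ∫ b : ℝ, ∫ y : ℝ, Psi (y, b) :=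
      MeasureTheory.integral_integral_swap (f := fun y b => Psi (y, b)) hPsiInt
    -- compute the y-integral for fixed b
    have E18 : (∫ b : ℝ, ∫ y : ℝ, Psi (y, b))
        = ∫ b in (0:ℝ)..T, ∫ y in (0:ℝ)..(b/2),
            y ^ (n - 2) * (b ^ 2 - 2 * b * y) ^ (m / 2) := by
      have hvanish : ∀ b ∉ Set.Icc (0:ℝ) T, (∫ y : ℝ, Psi (y, b)) = 0 := by
        intro b hb
        rw [Set.mem_Icc] at hb; push_neg at hb
        have hz : ∀ y : ℝ, Psi (y, b) = 0 := by
          intro y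
          rw [hPsidef]
          refine Set.indicator_of_notMem ?_ _
          rintro ⟨h0, h1, h2⟩
          rcases lt_or_ge b 0 with h | h
          · linarith
          · have := hb (by linarith); linarith
        simp only [hz, integral_zero]
      have hper : ∀ b ∈ Set.Icc (0:ℝ) T, (∫ y : ℝ, Psi (y, b))
          = ∫ y in (0:ℝ)..(b/2), y ^ (n - 2) * (b ^ 2 - 2 * b * y) ^ (m / 2) := by
        intro b hb
        rw [Set.mem_Icc] at hb
        have hw : ∀ y : ℝ, Psi (y, b)
            = Set.indicator (Set.Icc 0 (b/2))
                (fun y => y ^ (n - 2) * (b ^ 2 - 2 * b * y) ^ (m / 2)) y := by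
          intro y
          rw [hPsidef]
          by_cases h : 0 ≤ y ∧ y ≤ b/2
          · rw [Set.indicator_of_mem
              (show ((y, b) : ℝ × ℝ) ∈ {p : ℝ × ℝ | 0 ≤ p.1 ∧ 2 * p.1 ≤ p.2 ∧ p.2 ≤ T} from
                ⟨h.1, by simp only [Set.mem_setOf_eq]; linarith [h.2], hb.2⟩),
              Set.indicator_of_mem (Set.mem_Icc.2 h)]
          · rw [Set.indicator_of_notMem, Set.indicator_of_notMem]
            · rw [Set.mem_Icc]; exact h
            · rintro ⟨h0, h1, h2⟩; exact h ⟨h0, by linarith⟩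
        simp only [hw]
        rw [MeasureTheory.integral_indicator measurableSet_Icc, integral_Icc_eq_integral_Ioc,
          ← intervalIntegral.integral_of_le (by linarith [hb.1] : (0:ℝ) ≤ b/2)]
      calc (∫ b : ℝ, ∫ y : ℝ, Psi (y, b))
          = ∫ b in Set.Icc (0:ℝ) T, ∫ y : ℝ, Psi (y, b) :=
            (setIntegral_eq_integral_of_forall_compl_eq_zero hvanish).symm
        _ = ∫ b in Set.Icc (0:ℝ) T, ∫ y in (0:ℝ)..(b/2),
              y ^ (n - 2) * (b ^ 2 - 2 * b * y) ^ (m / 2) :=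
            setIntegral_congr_fun measurableSet_Icc (fun b hb => hper b hb)
        _ = ∫ b in (0:ℝ)..T, ∫ y in (0:ℝ)..(b/2),
              y ^ (n - 2) * (b ^ 2 - 2 * b * y) ^ (m / 2) := by
            rw [integral_Icc_eq_integral_Ioc,
              ← intervalIntegral.integral_of_le hT.le]
    -- evaluate
    have E19 : (∫ b in (0:ℝ)..T, ∫ y in (0:ℝ)..(b/2),
          y ^ (n - 2) * (b ^ 2 - 2 * b * y) ^ (m / 2))
        = Real.Gamma (m / 2 + 1) * Real.Gamma ((n:ℝ) - 1) / Real.Gamma ((n:ℝ) + m / 2)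
            / 2 ^ (n - 1) * (T ^ ((n:ℝ) + m) / ((n:ℝ) + m)) := by
      have hcg : ∀ b ∈ Set.uIcc (0:ℝ) T,
          (∫ y in (0:ℝ)..(b/2), y ^ (n - 2) * (b ^ 2 - 2 * b * y) ^ (m / 2))
            = (Real.Gamma (m / 2 + 1) * Real.Gamma ((n:ℝ) - 1) / Real.Gamma ((n:ℝ) + m / 2)
                / 2 ^ (n - 1)) * b ^ ((n:ℝ) + m - 1) := by
        intro b hb
        rw [Set.uIcc_of_le hT.le, Set.mem_Icc] at hb
        rw [auxInnerEval n hn m hm hb.1]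
        ring
      rw [intervalIntegral.integral_congr hcg, intervalIntegral.integral_const_mul,
        integral_rpow (Or.inl (by linarith : (-1:ℝ) < (n:ℝ) + m - 1)),
        show (n:ℝ) + m - 1 + 1 = (n:ℝ) + m by ring,
        Real.zero_rpow (by linarith : (n:ℝ) + m ≠ 0), sub_zero]
    -- chain everything together
    calc (∫ t : ℝ, ∫ y in Set.Ioi (0:ℝ), y ^ (n - 2) *
          (if y ≤ T / 2 - t ∧ y ≤ T / 2 + t then
            Real.sqrt ((T / 2 - t) ^ 2 - y ^ 2) ^ m else 0))
        = ∫ t in Set.Icc (-(T/2)) (T/2), ∫ y in Set.Ioi (0:ℝ), y ^ (n - 2) *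
            (if y ≤ T / 2 - t ∧ y ≤ T / 2 + t then
              Real.sqrt ((T / 2 - t) ^ 2 - y ^ 2) ^ m else 0) :=
          (setIntegral_eq_integral_of_forall_compl_eq_zero hvan1).symm
      _ = ∫ t in (-(T/2))..(T/2), ∫ y in Set.Ioi (0:ℝ), y ^ (n - 2) *
            (if y ≤ T / 2 - t ∧ y ≤ T / 2 + t then
              Real.sqrt ((T / 2 - t) ^ 2 - y ^ 2) ^ m else 0) := by
          rw [integral_Icc_eq_integral_Ioc,
            ← intervalIntegral.integral_of_le (by linarith : -(T/2) ≤ T/2)]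
      _ = ∫ t in (-(T/2))..(T/2), ∫ y in (0:ℝ)..min (T / 2 - t) (T - (T / 2 - t)),
            y ^ (n - 2) * ((T / 2 - t) ^ 2 - y ^ 2) ^ (m / 2) :=
          intervalIntegral.integral_congr E8
      _ = ∫ u in (0:ℝ)..T, ∫ y in (0:ℝ)..min u (T - u),
            y ^ (n - 2) * (u ^ 2 - y ^ 2) ^ (m / 2) := E9
      _ = ∫ u in (0:ℝ)..T, ∫ y : ℝ, Phi (u, y) := intervalIntegral.integral_congr E10
      _ = ∫ u : ℝ, ∫ y : ℝ, Phi (u, y) := E11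
      _ = ∫ y : ℝ, ∫ u : ℝ, Phi (u, y) := E12
      _ = ∫ y in (0:ℝ)..(T/2), ∫ u in y..(T - y),
            y ^ (n - 2) * (u ^ 2 - y ^ 2) ^ (m / 2) := E13
      _ = ∫ y in (0:ℝ)..(T/2), ∫ b in (2*y)..T,
            y ^ (n - 2) * (b ^ 2 - 2 * b * y) ^ (m / 2) :=
          intervalIntegral.integral_congr E14
      _ = ∫ y in (0:ℝ)..(T/2), ∫ b : ℝ, Psi (y, b) := intervalIntegral.integral_congr E15
      _ = ∫ y : ℝ, ∫ b : ℝ, Psi (y, b) := E16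
      _ = ∫ b : ℝ, ∫ y : ℝ, Psi (y, b) := E17
      _ = ∫ b in (0:ℝ)..T, ∫ y in (0:ℝ)..(b/2),
            y ^ (n - 2) * (b ^ 2 - 2 * b * y) ^ (m / 2) := E18
      _ = Real.Gamma (m / 2 + 1) * Real.Gamma ((n:ℝ) - 1) / Real.Gamma ((n:ℝ) + m / 2)
            / 2 ^ (n - 1) * (T ^ ((n:ℝ) + m) / ((n:ℝ) + m)) := E19
  -- final assembly
  rw [E1]
  simp only [E3]
  simp only [E4]
  rw [MeasureTheory.integral_const_mul, key, auxSphere n hn]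
  have hG3 : Real.Gamma ((n:ℝ) + m / 2) ≠ 0 := (Real.Gamma_pos_of_pos (by linarith)).ne'
  have hnm : (n:ℝ) + m ≠ 0 := by linarith
  have h2p : ((2:ℝ)) ^ (n - 1) ≠ 0 := by positivity
  field_simp
end

section
/- Let n ≥ 2 be an integer, T > 0, m ≥ 0 a real number, and fix any spatial coordinate index i ∈ {1,…,n-1}. Then ∫_{I[p,q]} (x^i)² · τ(x,q)^m dx = f₂(m) · T² · ∫_{I[p,q]} τ(x,q)^m dx, where f₂(m) = n(n+m) / ( 4(n+m+2)(n+m/2+1)(n+m/2) ). In particular the left-hand side is independent of the choice of spatial index i. -/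
open MeasureTheory

section AuxStmt4
open MeasureTheory intervalIntegral Set

lemma contRpow {m : ℝ} (hm : 0 ≤ m) : Continuous fun x : ℝ => x ^ m := by
  rw [continuous_iff_continuousAt]
  exact fun x => Real.continuousAt_rpow_const x m (Or.inr hm)

lemma memDiamond (n : ℕ) (T : ℝ) (x : MinkPt n) :
    x ∈ diamond n T ↔ ‖x.2‖ ≤ T/2 + x.1 ∧ ‖x.2‖ ≤ T/2 - x.1 := by
  simp only [diamond, causalLE, pDiam, qDiam, Set.mem_setOf_eq, zero_sub, norm_neg, sub_zero,
    sub_neg_eq_add]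
  constructor
  · rintro ⟨h1, h2⟩; exact ⟨by linarith, h2⟩
  · rintro ⟨h1, h2⟩; exact ⟨by linarith, h2⟩

lemma tau_q (n : ℕ) (T : ℝ) (x : MinkPt n) :
    tau x (qDiam n T) = Real.sqrt ((T/2 - x.1)^2 - ‖x.2‖^2) := by
  simp [tau, qDiam]

lemma diamond_isCompact (n : ℕ) (T : ℝ) : IsCompact (diamond n T) := by
  have hclosed : IsClosed (diamond n T) := by
    have : diamond n T = {x : MinkPt n | ‖x.2 - (pDiam n T).2‖ ≤ x.1 - (pDiam n T).1}
        ∩ {x : MinkPt n | ‖(qDiam n T).2 - x.2‖ ≤ (qDiam n T).1 - x.1} := rfl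
    rw [this]
    exact (isClosed_le (by fun_prop) (by fun_prop)).inter
      (isClosed_le (by fun_prop) (by fun_prop))
  refine IsCompact.of_isClosed_subset (isCompact_closedBall (0 : MinkPt n) (T/2)) hclosed ?_
  intro x hx
  rw [memDiamond] at hx
  obtain ⟨h1, h2⟩ := hx
  have hnorm : (0:ℝ) ≤ ‖x.2‖ := norm_nonneg _
  rw [Metric.mem_closedBall, dist_zero_right, Prod.norm_def]
  simp only [Real.norm_eq_abs, sup_le_iff]
  constructor
  · rw [abs_le]; constructor <;> linarith
  · linarith

lemma cont_tau_pow (n : ℕ) (T m : ℝ) (hm : 0 ≤ m) :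
    Continuous fun x : MinkPt n => tau x (qDiam n T) ^ m := by
  exact (contRpow hm).comp (Real.continuous_sqrt.comp (by fun_prop))

lemma integrableOn_diamond (n : ℕ) (T m : ℝ) (hm : 0 ≤ m) {g : MinkPt n → ℝ}
    (hg : Continuous g) :
    IntegrableOn (fun x : MinkPt n => g x * tau x (qDiam n T) ^ m) (diamond n T) := by
  exact (hg.mul (cont_tau_pow n T m hm)).continuousOn.integrableOn_compact
    (diamond_isCompact n T)

noncomputable def Jm (m : ℝ) (K : ℕ) : ℝ := ∫ w in (0:ℝ)..1, w ^ (m/2) * (1-w)^K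

lemma Jm_succ (m : ℝ) (hm : 0 ≤ m) (K : ℕ) :
    (m/2 + (K+1) + 1) * Jm m (K+1) = (K+1) * Jm m K := by
  have ha : (0:ℝ) ≤ m/2 := by linarith
  have hc1 : Continuous fun w : ℝ => w ^ (m/2) := contRpow ha
  have hφ : Continuous fun w : ℝ => w ^ (m/2+1) := contRpow (by linarith)
  have hderiv : ∀ x ∈ Ioo (0:ℝ) 1, HasDerivAt (fun w : ℝ => w ^ (m/2+1) * (1-w)^(K+1))
      ((m/2+1) * x ^ (m/2) * (1-x)^(K+1) + x ^ (m/2+1) * (-((K:ℝ)+1) * (1-x)^K)) x := by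
    intro x hx
    have hx0 : x ≠ 0 := ne_of_gt hx.1
    have h1 : HasDerivAt (fun w : ℝ => w ^ (m/2+1)) ((m/2+1) * x ^ (m/2+1-1)) x :=
      Real.hasDerivAt_rpow_const (Or.inl hx0)
    have h2 : HasDerivAt (fun w : ℝ => (1-w)^(K+1)) (-(((K:ℝ)+1) * (1-x)^K)) x := by
      have := ((hasDerivAt_pow (K+1) (1-x)).comp x ((hasDerivAt_id x).const_sub 1))
      exact this.congr_deriv (by rw [Nat.add_sub_cancel]; push_cast; ring)
    refine (h1.mul h2).congr_deriv ?_
    rw [show m/2+1-1 = m/2 by ring]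
    ring
  have key := integral_eq_sub_of_hasDerivAt_of_le (a := 0) (b := 1)
    (f := fun w : ℝ => w ^ (m/2+1) * (1-w)^(K+1))
    (f' := fun x : ℝ => (m/2+1) * x ^ (m/2) * (1-x)^(K+1) + x ^ (m/2+1) * (-((K:ℝ)+1) * (1-x)^K))
    zero_le_one ((hφ.mul (by fun_prop)).continuousOn) hderiv
    (by apply Continuous.intervalIntegrable; fun_prop)
  have e1 : (1:ℝ) ^ (m/2+1) * ((1:ℝ)-1)^(K+1) = 0 := by norm_num
  have e2 : (0:ℝ) ^ (m/2+1) * ((1:ℝ)-0)^(K+1) = 0 := by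
    simp [Real.zero_rpow (show m/2+1 ≠ 0 by positivity)]
  rw [e1, e2, sub_zero] at key
  have i1 : IntervalIntegrable (fun w : ℝ => (m/2+1) * w ^ (m/2) * (1-w)^(K+1)) volume 0 1 := by
    apply Continuous.intervalIntegrable; fun_prop
  have i2 : IntervalIntegrable (fun w : ℝ => w ^ (m/2+1) * (-((K:ℝ)+1) * (1-w)^K)) volume 0 1 := by
    apply Continuous.intervalIntegrable; fun_prop
  rw [integral_add i1 i2] at key
  have congr2 : ∫ w in (0:ℝ)..1, w ^ (m/2+1) * (-((K:ℝ)+1) * (1-w)^K) =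
      -((K:ℝ)+1) * ∫ w in (0:ℝ)..1, (w ^ (m/2) * (1-w)^K - w ^ (m/2) * (1-w)^(K+1)) := by
    rw [← intervalIntegral.integral_const_mul]
    apply integral_congr
    intro w hw
    rw [uIcc_of_le zero_le_one] at hw
    dsimp only
    rcases eq_or_lt_of_le hw.1 with h0 | h0
    · rw [← h0]
      simp [Real.zero_rpow (show m/2+1 ≠ 0 by positivity)]
    · rw [show w ^ (m/2+1) = w ^ (m/2) * w by rw [Real.rpow_add h0, Real.rpow_one]]
      ring
  have congr1 : ∫ w in (0:ℝ)..1, (m/2+1) * w ^ (m/2) * (1-w)^(K+1) = (m/2+1) * Jm m (K+1) := by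
    rw [Jm, ← intervalIntegral.integral_const_mul]
    apply integral_congr; intro w _; dsimp only; ring
  have isub : ∫ w in (0:ℝ)..1, (w ^ (m/2) * (1-w)^K - w ^ (m/2) * (1-w)^(K+1)) =
      Jm m K - Jm m (K+1) := by
    rw [Jm, Jm]
    apply intervalIntegral.integral_sub <;> (apply Continuous.intervalIntegrable; fun_prop)
  rw [congr1, congr2, isub] at key
  ring_nf at key ⊢
  linarith
noncomputable def Pint (m T : ℝ) (K : ℕ) : ℝ :=
  ∫ s in (0:ℝ)..T, ∫ r in (0:ℝ)..(min (T-s) s), r^K * Real.sqrt (s^2 - r^2) ^ m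

lemma Pint_eq (m T : ℝ) (hm : 0 ≤ m) (hT : 0 < T) (K : ℕ) :
    Pint m T K = (2:ℝ)⁻¹^(K+1) * Jm m K * (T ^ ((K:ℝ) + m + 2) / ((K:ℝ) + m + 2)) := by
  set Q : ℝ → ℝ → ℝ := fun s v => (v-s)^K * Real.sqrt ((2*s-v)*v) ^ m with hQ
  set Ψ : ℝ → ℝ → ℝ := fun s v => (Ioc s (min T (2*s))).indicator (Q s) v with hΨ
  have hQcont : Continuous fun p : ℝ × ℝ => Q p.1 p.2 := by
    apply Continuous.mul
    · fun_prop
    · exact (contRpow hm).comp (Real.continuous_sqrt.comp (by fun_prop))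
  -- Step 1+2 : Pint = ∫ s in 0..T, ∫ v, Ψ s v
  have step12 : Pint m T K = ∫ s in (0:ℝ)..T, ∫ v, Ψ s v := by
    rw [Pint]
    apply integral_congr
    intro s hs
    rw [uIcc_of_le hT.le] at hs
    dsimp only
    have e1 : ∀ r : ℝ, r^K * Real.sqrt (s^2 - r^2) ^ m = Q s (r + s) := by
      intro r
      rw [hQ]
      dsimp only
      rw [show r + s - s = r by ring, show (2*s - (r+s))*(r+s) = s^2 - r^2 by ring]
    simp_rw [e1]
    rw [integral_comp_add_right (Q s) s]
    have e2 : (0:ℝ) + s = s := by ring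
    have e3 : min (T-s) s + s = min T (2*s) := by
      rcases le_total (T-s) s with h | h
      · rw [min_eq_left h, min_eq_left (by linarith)]; ring
      · rw [min_eq_right h, min_eq_right (by linarith)]; ring
    rw [e2, e3, hΨ]
    have hle : s ≤ min T (2*s) := le_min hs.2 (by linarith [hs.1])
    rw [integral_of_le hle, ← MeasureTheory.integral_indicator measurableSet_Ioc]
  -- Step 3 : extend to ℝ
  have step3 : (∫ s in (0:ℝ)..T, ∫ v, Ψ s v) = ∫ s, ∫ v, Ψ s v := by
    rw [integral_of_le hT.le]
    apply setIntegral_eq_integral_of_forall_compl_eq_zero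
    intro s hs
    simp only [mem_Ioc, not_and_or, not_lt, not_le] at hs
    have : Ioc s (min T (2*s)) = ∅ := by
      apply Ioc_eq_empty
      rcases hs with h | h
      · exact fun hlt => absurd hlt (not_lt.2 ((min_le_right _ _).trans (by linarith)))
      · exact fun hlt => absurd hlt (not_lt.2 ((min_le_left _ _).trans h.le))
    rw [hΨ]
    simp [this]
  -- Step 4 : swap
  have hS : MeasurableSet {p : ℝ × ℝ | p.1 < p.2 ∧ p.2 ≤ T ∧ p.2 ≤ 2*p.1} := by
    apply MeasurableSet.inter
    · exact measurableSet_lt measurable_fst measurable_snd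
    apply MeasurableSet.inter
    · exact measurableSet_le measurable_snd measurable_const
    · exact measurableSet_le measurable_snd (by fun_prop)
  have huncurry : Function.uncurry Ψ =
      ({p : ℝ × ℝ | p.1 < p.2 ∧ p.2 ≤ T ∧ p.2 ≤ 2*p.1}).indicator (fun p => Q p.1 p.2) := by
    funext p
    rw [hΨ]
    simp only [Function.uncurry, Set.indicator_apply, mem_Ioc, mem_setOf_eq, le_min_iff]
  have hsub : {p : ℝ × ℝ | p.1 < p.2 ∧ p.2 ≤ T ∧ p.2 ≤ 2*p.1} ⊆ Icc (0,0) (T,T) := by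
    rintro ⟨s, v⟩ ⟨h1, h2, h3⟩
    simp only [mem_Icc, Prod.mk_le_mk]
    have hs0 : 0 < s := by nlinarith
    exact ⟨⟨hs0.le, by linarith⟩, ⟨by linarith, h2⟩⟩
  have hint : Integrable (Function.uncurry Ψ) := by
    rw [huncurry]
    rw [integrable_indicator_iff hS]
    exact (hQcont.continuousOn.integrableOn_compact isCompact_Icc).mono_set hsub
  have step4 : (∫ s, ∫ v, Ψ s v) = ∫ v, ∫ s, Ψ s v := by
    rw [MeasureTheory.Measure.volume_eq_prod] at hint
    exact integral_integral_swap hint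
  -- Step 5 : inner s-integral
  have step5 : (∫ v, ∫ s, Ψ s v) =
      ∫ v in (0:ℝ)..T, ∫ s in (v/2)..v, Q s v := by
    have key : ∀ v : ℝ, (∫ s, Ψ s v) =
        (Ioc (0:ℝ) T).indicator (fun v => ∫ s in (v/2)..v, Q s v) v := by
      intro v
      by_cases hvT : v ≤ T
      · have e : ∀ s, Ψ s v = (Ico (v/2) v).indicator (fun s => Q s v) s := by
          intro s
          rw [hΨ]
          simp only [Set.indicator_apply, mem_Ioc, mem_Ico, le_min_iff]
          congr 1
          simp only [eq_iff_iff]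
          constructor
          · rintro ⟨h1, _, h3⟩; exact ⟨by linarith, h1⟩
          · rintro ⟨h1, h2⟩; exact ⟨h2, hvT, by linarith⟩
        simp_rw [e]
        rw [MeasureTheory.integral_indicator measurableSet_Ico]
        by_cases hv0 : 0 < v
        · rw [indicator_of_mem (by exact ⟨hv0, hvT⟩)]
          rw [MeasureTheory.integral_Ico_eq_integral_Ioo, ← MeasureTheory.integral_Ioc_eq_integral_Ioo,
            ← integral_of_le (by linarith : v/2 ≤ v)]
        · rw [indicator_of_notMem (by simp [hv0])]
          have hv0' : v ≤ 0 := not_lt.1 hv0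
          rw [Ico_eq_empty (by rw [not_lt]; linarith)]
          simp
      · have e : ∀ s, Ψ s v = 0 := by
          intro s
          rw [hΨ]
          apply indicator_of_notMem
          simp only [mem_Ioc, le_min_iff, not_and_or, not_le]
          right; left; linarith [not_le.1 hvT]
        simp_rw [e]
        rw [indicator_of_notMem (by simp [hvT])]
        simp
    simp_rw [key]
    rw [MeasureTheory.integral_indicator measurableSet_Ioc, ← integral_of_le hT.le]
  -- Steps 6+7 : compute inner integral
  have step67 : EqOn (fun v : ℝ => ∫ s in (v/2)..v, Q s v)
      (fun v : ℝ => (2:ℝ)⁻¹^(K+1) * Jm m K * v ^ ((K:ℝ) + m + 1)) (uIcc (0:ℝ) T) := by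
    intro v hv
    rw [uIcc_of_le hT.le] at hv
    dsimp only
    rcases eq_or_lt_of_le hv.1 with h0 | h0
    · rw [← h0]
      norm_num
      exact Or.inr (Real.zero_rpow (by positivity))
    · set g : ℝ → ℝ := fun u => ((v-u)/2)^K * Real.sqrt (u*v) ^ m with hg
      have eQ : ∀ s : ℝ, Q s v = g (2*s - v) := by
        intro s
        rw [hg, hQ]
        dsimp only
        rw [show v - (2*s - v) = (v - s) * 2 by ring, mul_div_cancel_right₀ _ (two_ne_zero)]
      simp_rw [eQ]
      rw [integral_comp_mul_sub g two_ne_zero v,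
        show 2*(v/2) - v = 0 by ring, show 2*v - v = v by ring]
      have cong1 : ∫ u in (0:ℝ)..v, g u =
          ∫ u in (0:ℝ)..v, ((2:ℝ)⁻¹^K * v^(m/2)) * ((v-u)^K * u^(m/2)) := by
        apply integral_congr
        intro u hu
        rw [uIcc_of_le h0.le] at hu
        rw [hg]
        dsimp only
        rw [show (v-u)/2 = (2:ℝ)⁻¹ * (v-u) by ring, mul_pow,
          Real.sqrt_mul hu.1 v,
          Real.mul_rpow (Real.sqrt_nonneg _) (Real.sqrt_nonneg _),
          Real.sqrt_eq_rpow u, Real.sqrt_eq_rpow v,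
          ← Real.rpow_mul hu.1, ← Real.rpow_mul hv.1,
          show (1/2) * m = m/2 by ring]
        ring
      rw [cong1, intervalIntegral.integral_const_mul]
      have hscale := integral_comp_mul_left
        (fun u : ℝ => (v-u)^K * u^(m/2)) (c := v) (a := 0) (b := 1) (ne_of_gt h0)
      rw [mul_zero, mul_one] at hscale
      have hscale' : ∫ u in (0:ℝ)..v, (v-u)^K * u^(m/2) =
          v * ∫ w in (0:ℝ)..1, (v-(v*w))^K * (v*w)^(m/2) := by
        rw [hscale, smul_eq_mul, ← mul_assoc, mul_inv_cancel₀ (ne_of_gt h0), one_mul]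
      have cong2 : ∫ w in (0:ℝ)..1, (v-(v*w))^K * (v*w)^(m/2) =
          (v^K * v^(m/2)) * Jm m K := by
        rw [Jm, ← intervalIntegral.integral_const_mul]
        apply integral_congr
        intro w hw
        rw [uIcc_of_le zero_le_one] at hw
        dsimp only
        rw [show v - v*w = v*(1-w) by ring, mul_pow, Real.mul_rpow h0.le hw.1]
        ring
      rw [hscale', cong2, smul_eq_mul]
      rw [show (K:ℝ) + m + 1 = m/2 + (1 + ((K:ℝ) + m/2)) by ring,
        Real.rpow_add h0, Real.rpow_add h0, Real.rpow_add h0, Real.rpow_one,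
        Real.rpow_natCast]
      ring
  -- Step 8 : outer integral
  rw [step12, step3, step4, step5, integral_congr step67]
  simp_rw [mul_assoc]
  rw [intervalIntegral.integral_const_mul, intervalIntegral.integral_const_mul, integral_rpow (Or.inl (by have h1 : (0:ℝ) ≤ (K:ℝ) := Nat.cast_nonneg K; linarith)),
    Real.zero_rpow (by positivity : ((K:ℝ) + m + 1) + 1 ≠ 0),
    show ((K:ℝ) + m + 1) + 1 = (K:ℝ) + m + 2 by ring]
  ring

lemma diamond_integral (n : ℕ) (hn : 2 ≤ n) (T m : ℝ) (hT : 0 < T) (hm : 0 ≤ m) (k : ℕ) :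
    ∫ x in diamond n T, ‖x.2‖^k * tau x (qDiam n T) ^ m =
      ((n-1 : ℕ) * (volume (Metric.ball (0:EuclideanSpace ℝ (Fin (n-1))) 1)).toReal) *
        Pint m T (n-2+k) := by
  have hd1 : 1 ≤ n - 1 := by omega
  haveI : Nontrivial (EuclideanSpace ℝ (Fin (n-1))) := by
    refine ⟨0, EuclideanSpace.single ⟨0, hd1⟩ 1, fun h => ?_⟩
    have := congrArg (fun y : EuclideanSpace ℝ (Fin (n-1)) => y ⟨0, hd1⟩) h
    simp [EuclideanSpace.single_apply] at this
  set F : MinkPt n → ℝ := fun x => ‖x.2‖^k * tau x (qDiam n T) ^ m with hF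
  have hFcont : Continuous F := by
    apply Continuous.mul
    · fun_prop
    · exact cont_tau_pow n T m hm
  have hmeas : MeasurableSet (diamond n T) :=
    (diamond_isCompact n T).isClosed.measurableSet
  have hIOn : IntegrableOn F (diamond n T) :=
    hFcont.continuousOn.integrableOn_compact (diamond_isCompact n T)
  have h1 : Integrable ((diamond n T).indicator F) volume :=
    (integrable_indicator_iff hmeas).2 hIOn
  rw [← MeasureTheory.integral_indicator hmeas, MeasureTheory.Measure.volume_eq_prod]
  rw [MeasureTheory.Measure.volume_eq_prod] at h1
  rw [MeasureTheory.integral_prod _ h1]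
  set ρ : ℝ → ℝ := fun t => min (T/2 + t) (T/2 - t) with hρ
  set ft : ℝ → ℝ → ℝ := fun t r =>
    (Icc (0:ℝ) (ρ t)).indicator (fun r => r^k * Real.sqrt ((T/2 - t)^2 - r^2) ^ m) r with hft
  have inner : ∀ (t : ℝ) (y : EuclideanSpace ℝ (Fin (n-1))),
      (diamond n T).indicator F (t, y) = ft t ‖y‖ := by
    intro t y
    have hiff : ‖y‖ ∈ Icc (0:ℝ) (ρ t) ↔ (t, y) ∈ diamond n T := by
      rw [memDiamond]
      simp only [mem_Icc, hρ, le_min_iff, norm_nonneg, true_and]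
    by_cases hxy : (t, y) ∈ diamond n T
    · rw [Set.indicator_of_mem hxy, hft]
      dsimp only
      rw [Set.indicator_of_mem (hiff.2 hxy), hF]
      dsimp only
      rw [tau_q]
    · rw [Set.indicator_of_notMem hxy, hft]
      dsimp only
      rw [Set.indicator_of_notMem (fun hc => hxy (hiff.1 hc))]
  simp_rw [inner]
  have polar : ∀ t : ℝ, ∫ y : EuclideanSpace ℝ (Fin (n-1)), ft t ‖y‖ =
      (n-1) • (volume (Metric.ball (0:EuclideanSpace ℝ (Fin (n-1))) 1)).toReal •
        ∫ r in Ioi (0:ℝ), r ^ (n-1-1) • ft t r := by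
    intro t
    have := MeasureTheory.integral_fun_norm_addHaar
      (volume : Measure (EuclideanSpace ℝ (Fin (n-1)))) (ft t)
    simpa only [finrank_euclideanSpace_fin, measureReal_def] using this
  simp_rw [polar]
  have hsub2 : n - 1 - 1 = n - 2 := by omega
  set Ht : ℝ → ℝ := fun t =>
    ∫ r in Ioc (0:ℝ) (ρ t), r^(n-2+k) * Real.sqrt ((T/2 - t)^2 - r^2) ^ m with hHt
  have hrad : ∀ t : ℝ, (∫ r in Ioi (0:ℝ), r ^ (n-1-1) • ft t r) = Ht t := by
    intro t
    have pull : ∀ r : ℝ, r ^ (n-1-1) • ft t r =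
        (Icc (0:ℝ) (ρ t)).indicator
          (fun r => r^(n-2+k) * Real.sqrt ((T/2 - t)^2 - r^2) ^ m) r := by
      intro r
      rw [hft]
      simp only [Set.indicator_apply]
      split
      · rw [smul_eq_mul, hsub2, pow_add]; ring
      · rw [smul_zero]
    simp_rw [pull]
    rw [MeasureTheory.setIntegral_indicator measurableSet_Icc]
    have heq : Ioi (0:ℝ) ∩ Icc 0 (ρ t) = Ioc 0 (ρ t) := by
      ext r
      simp only [mem_inter_iff, mem_Ioi, mem_Icc, mem_Ioc]
      constructor
      · rintro ⟨h1', _, h3'⟩; exact ⟨h1', h3'⟩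
      · rintro ⟨h1', h2'⟩; exact ⟨h1', h1'.le, h2'⟩
    rw [heq, hHt]
  simp_rw [hrad, nsmul_eq_mul, smul_eq_mul, ← mul_assoc]
  rw [MeasureTheory.integral_const_mul]
  congr 1
  have hvanish : ∀ t ∉ Icc (-(T/2)) (T/2), Ht t = 0 := by
    intro t ht
    simp only [mem_Icc, not_and_or, not_le] at ht
    rw [hHt]
    dsimp only
    have hempty : Ioc (0:ℝ) (ρ t) = ∅ := by
      apply Ioc_eq_empty
      rw [not_lt]
      have h1' : ρ t ≤ T/2 + t := min_le_left _ _
      have h2' : ρ t ≤ T/2 - t := min_le_right _ _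
      rcases ht with h | h
      · linarith
      · linarith
    rw [hempty]
    simp
  rw [← setIntegral_eq_integral_of_forall_compl_eq_zero hvanish,
    MeasureTheory.integral_Icc_eq_integral_Ioc, ← integral_of_le (by linarith : -(T/2) ≤ T/2)]
  have hcomp := integral_comp_sub_left (a := 0) (b := T) Ht (T/2)
  rw [show T/2 - T = -(T/2) by ring, show T/2 - 0 = T/2 by ring] at hcomp
  rw [← hcomp, Pint]
  apply integral_congr
  intro s hs
  rw [uIcc_of_le hT.le] at hs
  dsimp only
  rw [hHt]
  dsimp only
  have e0 : ρ (T/2 - s) = min (T-s) s := by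
    rw [hρ]
    dsimp only
    rw [show T/2 + (T/2 - s) = T - s by ring, show T/2 - (T/2 - s) = s by ring]
  have e2 : ∀ r : ℝ, r^(n-2+k) * Real.sqrt ((T/2 - (T/2 - s))^2 - r^2) ^ m
      = r^(n-2+k) * Real.sqrt (s^2 - r^2) ^ m := by
    intro r
    rw [show T/2 - (T/2 - s) = s by ring]
  rw [e0]
  simp_rw [e2]
  rw [integral_of_le (le_min (by linarith [hs.2] : (0:ℝ) ≤ T - s) hs.1)]

lemma diamond_symm (n : ℕ) (hn : 2 ≤ n) (T m : ℝ) (hm : 0 ≤ m) (i : Fin (n-1)) :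
    ∫ x in diamond n T, ‖x.2‖^2 * tau x (qDiam n T) ^ m =
      ((n-1 : ℕ) : ℝ) * ∫ x in diamond n T, (x.2 i)^2 * tau x (qDiam n T) ^ m := by
  have hswap : ∀ j : Fin (n-1),
      ∫ x in diamond n T, (x.2 j)^2 * tau x (qDiam n T) ^ m =
      ∫ x in diamond n T, (x.2 i)^2 * tau x (qDiam n T) ^ m := by
    intro j
    set e := LinearIsometryEquiv.piLpCongrLeft 2 ℝ ℝ (Equiv.swap i j) with he
    set Φ : MinkPt n → MinkPt n := fun x => (x.1, e x.2) with hΦ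
    have hΦmp : MeasurePreserving Φ volume volume := by
      have := (MeasurePreserving.id (volume : Measure ℝ)).prod
        e.measurePreserving
      exact this
    have hΦemb : MeasurableEmbedding Φ := by
      have := (Homeomorph.prodCongr (Homeomorph.refl ℝ)
        (e.toHomeomorph)).measurableEmbedding
      exact this
    have hpre : Φ ⁻¹' (diamond n T) = diamond n T := by
      ext x
      simp only [mem_preimage, hΦ, memDiamond, e.norm_map]
    have key := hΦmp.setIntegral_preimage_emb hΦemb
      (fun y => (y.2 i)^2 * tau y (qDiam n T) ^ m) (diamond n T)
    rw [hpre] at key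
    rw [← key]
    apply MeasureTheory.setIntegral_congr_fun
      (diamond_isCompact n T).isClosed.measurableSet
    intro x _
    dsimp only
    have h1 : (e x.2) i = x.2 j := by
      rw [he, LinearIsometryEquiv.piLpCongrLeft_apply]
      rw [Equiv.piCongrLeft'_apply]
      rw [Equiv.symm_swap, Equiv.swap_apply_left]
    have h2 : tau (x.1, e x.2) (qDiam n T) = tau x (qDiam n T) := by
      rw [tau_q, tau_q]
      simp [e.norm_map]
    rw [h1, h2]
  have hnorm : ∀ x : MinkPt n, ‖x.2‖^2 * tau x (qDiam n T) ^ m =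
      ∑ j : Fin (n-1), (x.2 j)^2 * tau x (qDiam n T) ^ m := by
    intro x
    rw [← Finset.sum_mul]
    congr 1
    rw [EuclideanSpace.norm_eq, Real.sq_sqrt (by positivity)]
    apply Finset.sum_congr rfl
    intro j _
    rw [Real.norm_eq_abs, sq_abs]
  simp_rw [hnorm]
  rw [MeasureTheory.integral_finset_sum]
  · rw [Finset.sum_congr rfl (fun j _ => hswap j), Finset.sum_const, Finset.card_univ,
      Fintype.card_fin, nsmul_eq_mul]
  · intro j _
    apply integrableOn_diamond n T m hm
    fun_prop

end AuxStmt4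

/-- For any spatial coordinate index `i ∈ {1,…,n-1}`,
`∫_{I[p,q]} (x^i)² τ(x,q)^m dx = f₂(m) · T² · ∫_{I[p,q]} τ(x,q)^m dx`, where
`f₂(m) = n(n+m)/(4(n+m+2)(n+m/2+1)(n+m/2))`; in particular the left-hand side is
independent of the choice of spatial index `i`. -/
theorem stmt4 (n : ℕ) (hn : 2 ≤ n) (T m : ℝ) (hT : 0 < T) (hm : 0 ≤ m) (i : Fin (n - 1)) :
    (∫ x in diamond n T, (x.2 i) ^ 2 * tau x (qDiam n T) ^ m) =
      ((n : ℝ) * ((n : ℝ) + m) /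
          (4 * ((n : ℝ) + m + 2) * ((n : ℝ) + m / 2 + 1) * ((n : ℝ) + m / 2))) *
        T ^ 2 * ∫ x in diamond n T, tau x (qDiam n T) ^ m := by
  have h2n : (2:ℝ) ≤ (n:ℝ) := by exact_mod_cast hn
  have hd1 : ((n-1:ℕ):ℝ) = (n:ℝ) - 1 := by
    push_cast [Nat.cast_sub (show 1 ≤ n by omega)]; ring
  have hd2 : ((n-2:ℕ):ℝ) = (n:ℝ) - 2 := by
    push_cast [Nat.cast_sub (show 2 ≤ n by omega)]; ring
  have h2 := diamond_integral n hn T m hT hm 2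
  have h0 := diamond_integral n hn T m hT hm 0
  have hsym := diamond_symm n hn T m hm i
  rw [Pint_eq m T hm hT] at h2 h0
  have hRHS : (∫ x in diamond n T, tau x (qDiam n T) ^ m)
      = ∫ x in diamond n T, ‖x.2‖^0 * tau x (qDiam n T) ^ m := by
    apply MeasureTheory.setIntegral_congr_fun (diamond_isCompact n T).isClosed.measurableSet
    intro x _
    dsimp only
    rw [pow_zero, one_mul]
  have hK2 : ((n-2+2:ℕ):ℝ) = (n:ℝ) := by push_cast [hd2]; ring
  rw [hK2, hd1] at h2
  simp only [Nat.add_zero] at h0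
  rw [hd2, hd1] at h0
  rw [hd1] at hsym
  have r2 := Jm_succ m hm (n-2+1)
  have r1 := Jm_succ m hm (n-2)
  have hu1 : ((n-2+1:ℕ):ℝ) = (n:ℝ) - 1 := by push_cast [hd2]; ring
  rw [hu1] at r2
  rw [hd2] at r1
  have hne1 : (n:ℝ) - 1 ≠ 0 := by linarith
  have hne2 : m/2 + (n:ℝ) + 1 ≠ 0 := by linarith
  have hJ2 : Jm m (n-2+2) = (n:ℝ) * Jm m (n-2+1) / (m/2 + (n:ℝ) + 1) := by
    rw [eq_div_iff hne2]
    have e : n-2+1+1 = n-2+2 := rfl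
    rw [← e]
    linear_combination r2
  have hJ0 : Jm m (n-2) = (m/2 + (n:ℝ)) * Jm m (n-2+1) / ((n:ℝ) - 1) := by
    rw [eq_div_iff hne1]
    linear_combination (-1 : ℝ) * r1
  rw [hJ2] at h2
  rw [hJ0] at h0
  have hTsplit : T ^ ((n:ℝ) + m + 2) = T ^ ((n:ℝ) - 2 + m + 2) * T^2 := by
    rw [← Real.rpow_natCast T 2, ← Real.rpow_add hT]
    congr 1
    push_cast
    ring
  have hpow2 : (2:ℝ)⁻¹ ^ (n-2+2+1) = (2:ℝ)⁻¹ ^ (n-2+1) * (2:ℝ)⁻¹^2 := by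
    rw [← pow_add]
  rw [hTsplit, hpow2] at h2
  apply mul_left_cancel₀ hne1
  rw [← hsym, h2, hRHS, h0]
  have hne3 : (n:ℝ) + m + 2 ≠ 0 := by linarith
  have hne4 : (n:ℝ) - 2 + m + 2 ≠ 0 := by linarith
  have hne5 : (n:ℝ) + m/2 + 1 ≠ 0 := by linarith
  have hne6 : (n:ℝ) + m/2 ≠ 0 := by linarith
  field_simp
  ring
end
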